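/- For every m ≥ 1 and d ≥ 1, s_{2m}(Z_2^d) ≤ β_{2m}(Z_2^d) + 2m − 1. Equivalently: every multiset of β_{2m}(Z_2^d) + 2m − 1 elements of Z_2^d contains a sub-multiset of size 2m whose elements sum to zero. -/

import Mathlib

/-- `A` is a zero-free set of rank `r`: the sum of any `r` pairwise distinct
elements of `A` is nonzero. -/
def IsZeroFreeSet {G : Type*} [AddCommGroup G] (r : ℕ) (A : Finset G) : Prop :=
  ∀ B ⊆ A, B.card = r → ∑ x ∈ B, x ≠ 0

/-- `β_r(G)`: the largest size of a zero-free set of rank `r` in `G`. -/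
noncomputable def zeroFreeNumber (G : Type*) [AddCommGroup G] [Fintype G] (r : ℕ) : ℕ :=
  sSup {n | ∃ A : Finset G, IsZeroFreeSet r A ∧ A.card = n}

/-- `s_r(G)`: the smallest `s` such that every multiset of `s` elements of `G`
has a zero-sum sub-multiset of size `r`. -/
noncomputable def egzConst (G : Type*) [AddCommGroup G] [Fintype G] (r : ℕ) : ℕ :=
  sInf {s | ∀ S : Multiset G, Multiset.card S = s →
    ∃ T ≤ S, Multiset.card T = r ∧ T.sum = 0}

/-- For every `m ≥ 1` and `d ≥ 1`, `s_{2m}(ℤ₂^d) ≤ β_{2m}(ℤ₂^d) + 2m − 1`;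
equivalently, every multiset of `β_{2m}(ℤ₂^d) + 2m − 1` elements of `ℤ₂^d` contains
a sub-multiset of size `2m` whose elements sum to zero. -/
theorem egz_le_zeroFree_add (m d : ℕ) (hm : 1 ≤ m) (hd : 1 ≤ d) :
    (∀ S : Multiset (Fin d → ZMod 2),
      Multiset.card S = zeroFreeNumber (Fin d → ZMod 2) (2 * m) + 2 * m - 1 →
      ∃ T ≤ S, Multiset.card T = 2 * m ∧ T.sum = 0) ∧
    egzConst (Fin d → ZMod 2) (2 * m) ≤
      zeroFreeNumber (Fin d → ZMod 2) (2 * m) + 2 * m - 1 := by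
  set G := Fin d → ZMod 2 with hG
  set β := zeroFreeNumber G (2 * m) with hβ
  -- boundedness of the defining set of β
  have hbdd : BddAbove {n | ∃ A : Finset G, IsZeroFreeSet (2 * m) A ∧ A.card = n} := by
    refine ⟨Fintype.card G, fun n hn => ?_⟩
    obtain ⟨A, _, rfl⟩ := hn
    exact A.card_le_univ
  -- any finset larger than β contains a zero-sum 2m-subset
  have hnotfree : ∀ A : Finset G, β < A.card →
      ∃ B ⊆ A, B.card = 2 * m ∧ ∑ x ∈ B, x = 0 := by
    intro A hA
    by_contra h
    push_neg at h
    have hmem : A.card ∈ {n | ∃ A : Finset G, IsZeroFreeSet (2 * m) A ∧ A.card = n} :=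
      ⟨A, fun B hB hcard => h B hB hcard, rfl⟩
    have hle : A.card ≤ β := by
      rw [hβ]; unfold zeroFreeNumber; exact le_csSup hbdd hmem
    omega
  have hself : ∀ x : G, x + x = 0 := by
    intro x
    funext i
    have h2 : ∀ a : ZMod 2, a + a = 0 := by decide
    exact h2 (x i)
  -- the duplicate-free case
  have nodupCase : ∀ S : Multiset G, S.Nodup → β + 1 ≤ Multiset.card S →
      ∃ T ≤ S, Multiset.card T = 2 * m ∧ T.sum = 0 := by
    intro S hnd hcard
    have hc : S.toFinset.card = Multiset.card S := Multiset.toFinset_card_of_nodup hnd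
    obtain ⟨B, hBsub, hBcard, hBsum⟩ := hnotfree S.toFinset (by omega)
    refine ⟨B.val, ?_, hBcard, ?_⟩
    · exact (Multiset.le_iff_subset B.nodup).2
        (fun x hx => Multiset.mem_toFinset.1 (hBsub hx))
    · rwa [Finset.sum_eq_multiset_sum, show (fun (x:G) => x) = id from rfl,
        Multiset.map_id] at hBsum
  -- main induction: extract pairs of equal elements
  have key : ∀ j : ℕ, ∀ S : Multiset G, Multiset.card S = β + 2 * j + 1 →
      (∃ T ≤ S, Multiset.card T = 2 * j + 2 ∧ T.sum = 0) ∨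
      (∃ T ≤ S, Multiset.card T = 2 * m ∧ T.sum = 0) := by
    intro j
    induction j with
    | zero =>
      intro S hcard
      by_cases hnd : S.Nodup
      · exact Or.inr (nodupCase S hnd (by omega))
      · rw [Multiset.nodup_iff_count_le_one] at hnd
        push_neg at hnd
        obtain ⟨x, hx⟩ := hnd
        refine Or.inl ⟨{x, x}, ?_, by simp, by simp [hself x]⟩
        rw [Multiset.le_iff_count]
        intro a
        by_cases hax : a = x
        · subst hax
          simp only [Multiset.insert_eq_cons, Multiset.count_cons_self,
            Multiset.count_singleton_self]
          omega
        · simp [Multiset.insert_eq_cons, Multiset.count_cons, Multiset.count_singleton, hax]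
    | succ j ih =>
      intro S hcard
      by_cases hnd : S.Nodup
      · exact Or.inr (nodupCase S hnd (by omega))
      · rw [Multiset.nodup_iff_count_le_one] at hnd
        push_neg at hnd
        obtain ⟨x, hx⟩ := hnd
        have hpair : ({x, x} : Multiset G) ≤ S := by
          rw [Multiset.le_iff_count]
          intro a
          by_cases hax : a = x
          · subst hax
            simp only [Multiset.insert_eq_cons, Multiset.count_cons_self,
              Multiset.count_singleton_self]
            omega
          · simp [Multiset.insert_eq_cons, Multiset.count_cons, Multiset.count_singleton, hax]
        have hcard' : Multiset.card (S - {x, x}) = β + 2 * j + 1 := by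
          rw [Multiset.card_sub hpair]
          simp at hcard ⊢
          omega
        obtain h | h := ih (S - {x, x}) hcard'
        · obtain ⟨T, hTle, hTcard, hTsum⟩ := h
          refine Or.inl ⟨T + {x, x}, ?_, ?_, ?_⟩
          · calc T + {x, x} ≤ (S - {x, x}) + {x, x} := add_le_add hTle le_rfl
              _ = S := tsub_add_cancel_of_le hpair
          · simp [hTcard]; omega
          · simp [Multiset.sum_add, hTsum, hself x]
        · obtain ⟨T, hTle, hTcard, hTsum⟩ := h
          exact Or.inr ⟨T, hTle.trans (tsub_le_self), hTcard, hTsum⟩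
  have main : ∀ S : Multiset G, Multiset.card S = β + 2 * m - 1 →
      ∃ T ≤ S, Multiset.card T = 2 * m ∧ T.sum = 0 := by
    intro S hS
    obtain h | h := key (m - 1) S (by omega)
    · obtain ⟨T, h1, h2, h3⟩ := h
      exact ⟨T, h1, by omega, h3⟩
    · exact h
  exact ⟨main, Nat.sInf_le main⟩
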